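/- With notation as above (two predictors X₁, X₂, response Y, multiple regression coefficients b₁, b₂, and c₂₁ the slope of the regression of X₂ on X₁), define X₂* = X₂ − c₂₁X₁. Then the slope a₂* of the simple regression of Y on X₂* equals b₂. -/

import Mathlib

open Finset Filter

/-- Sample mean of a data vector. -/
noncomputable def mean (p : ℕ) (x : Fin p → ℝ) : ℝ := (∑ i, x i) / (p : ℝ)

/-- Sample covariance of two data vectors. -/
noncomputable def cov (p : ℕ) (x y : Fin p → ℝ) : ℝ :=
  (∑ i, (x i - mean p x) * (y i - mean p y)) / (p : ℝ)

/-- Sample variance of a data vector. -/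
noncomputable def svar (p : ℕ) (x : Fin p → ℝ) : ℝ := cov p x x

/-- Slope of the simple least-squares regression of `y` on `x`. -/
noncomputable def regSlope (p : ℕ) (x y : Fin p → ℝ) : ℝ := cov p x y / svar p x

lemma key_min (p : ℕ) (r g : Fin p → ℝ)
    (h : ∀ t : ℝ, ∑ i, (r i)^2 ≤ ∑ i, (r i - t * g i)^2) :
    ∑ i, r i * g i = 0 := by
  set S := ∑ i, r i * g i with hS
  set G := ∑ i, (g i)^2 with hGdef
  have hG : 0 ≤ G := Finset.sum_nonneg fun i _ => sq_nonneg _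
  have hexp : ∀ t : ℝ, ∑ i, (r i - t * g i)^2
      = ∑ i, (r i)^2 - 2*t*S + t^2*G := by
    intro t
    have e : ∀ i : Fin p, (r i - t * g i)^2
        = (r i)^2 - 2*t*(r i * g i) + t^2*(g i)^2 := fun i => by ring
    simp only [e, Finset.sum_add_distrib, Finset.sum_sub_distrib, ← Finset.mul_sum]
    rfl
  have h1 := h (S/(G+1))
  rw [hexp] at h1
  have hG1 : (0:ℝ) < G + 1 := by linarith
  have h0 : 0 ≤ -2*(S/(G+1))*S + (S/(G+1))^2*G := by linarith
  have h3 : 0 ≤ (-2*(S/(G+1))*S + (S/(G+1))^2*G) * (G+1)^2 :=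
    mul_nonneg h0 (by positivity)
  have h4 : (-2*(S/(G+1))*S + (S/(G+1))^2*G) * (G+1)^2
      = -2*S^2*(G+1) + S^2*G := by field_simp
  rw [h4] at h3
  nlinarith [sq_nonneg S]

lemma cov_eq (p : ℕ) (hp : (p:ℝ) ≠ 0) (x y : Fin p → ℝ) :
    cov p x y = (∑ i, x i * y i)/(p:ℝ) - (∑ i, x i)*(∑ i, y i)/(p:ℝ)^2 := by
  have expand : ∑ i, (x i - (∑ j, x j)/(p:ℝ)) * (y i - (∑ j, y j)/(p:ℝ))
      = ∑ i, x i * y i - (∑ i, x i)*(∑ i, y i)/(p:ℝ) := by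
    have e : ∀ i : Fin p, (x i - (∑ j, x j)/(p:ℝ)) * (y i - (∑ j, y j)/(p:ℝ))
        = x i * y i - ((∑ j, x j)/(p:ℝ)) * y i - ((∑ j, y j)/(p:ℝ)) * x i
          + ((∑ j, x j)/(p:ℝ)) * ((∑ j, y j)/(p:ℝ)) := fun i => by ring
    rw [Finset.sum_congr rfl fun i _ => e i]
    simp only [Finset.sum_add_distrib, Finset.sum_sub_distrib, ← Finset.mul_sum,
      Finset.sum_const, Finset.card_univ, Fintype.card_fin, smul_eq_mul]
    field_simp
    linear_combination ((∑ j, x j) * ∑ j, y j) * mul_inv_cancel₀ hp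
  rw [cov, mean, mean, expand]
  field_simp

lemma cov_comm (p : ℕ) (x y : Fin p → ℝ) : cov p x y = cov p y x := by
  unfold cov
  rw [Finset.sum_congr rfl fun i _ => mul_comm _ _]

lemma cov_sub_smul (p : ℕ) (hp : (p:ℝ) ≠ 0) (x z y : Fin p → ℝ) (a : ℝ) :
    cov p (fun i => x i - a * z i) y = cov p x y - a * cov p z y := by
  rw [cov_eq p hp, cov_eq p hp, cov_eq p hp]
  have e1 : ∑ i, (x i - a * z i) * y i
      = ∑ i, x i * y i - a * ∑ i, z i * y i := by
    rw [Finset.mul_sum, ← Finset.sum_sub_distrib]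
    exact Finset.sum_congr rfl fun i _ => by ring
  have e2 : ∑ i, (x i - a * z i) = ∑ i, x i - a * ∑ i, z i := by
    rw [Finset.mul_sum, ← Finset.sum_sub_distrib]
  rw [e1, e2]
  ring

theorem multiple_eq_simple_on_adjusted_second
    (p : ℕ) (Y X1 X2 : Fin p → ℝ) (b0 b1 b2 : ℝ)
    (hBmin : ∀ t0 t1 t2 : ℝ,
      ∑ i, (Y i - b0 - b1 * X1 i - b2 * X2 i)^2 ≤ ∑ i, (Y i - t0 - t1 * X1 i - t2 * X2 i)^2)
    (hBuniq : ∀ t0 t1 t2 : ℝ,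
      ∑ i, (Y i - t0 - t1 * X1 i - t2 * X2 i)^2 ≤ ∑ i, (Y i - b0 - b1 * X1 i - b2 * X2 i)^2 →
      t0 = b0 ∧ t1 = b1 ∧ t2 = b2)
    (hv1 : svar p X1 ≠ 0) (hv2 : svar p X2 ≠ 0)
    (hr : (cov p X1 X2)^2 ≠ svar p X1 * svar p X2)
    (hvstar : svar p (fun i => X2 i - regSlope p X1 X2 * X1 i) ≠ 0) :
    regSlope p (fun i => X2 i - regSlope p X1 X2 * X1 i) Y = b2 := by
  have hp : (p:ℝ) ≠ 0 := by
    intro h0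
    apply hv1
    have hp0 : p = 0 := Nat.cast_eq_zero.mp h0
    subst hp0
    simp [svar, cov]
  -- normal equations
  have N0 : ∑ i, (Y i - b0 - b1*X1 i - b2*X2 i) * 1 = 0 := by
    apply key_min
    intro t
    calc ∑ i, (Y i - b0 - b1*X1 i - b2*X2 i)^2
        ≤ ∑ i, (Y i - (b0+t) - b1*X1 i - b2*X2 i)^2 := hBmin (b0+t) b1 b2
      _ = ∑ i, ((Y i - b0 - b1*X1 i - b2*X2 i) - t * 1)^2 :=
        Finset.sum_congr rfl fun i _ => by ring
  have N1 : ∑ i, (Y i - b0 - b1*X1 i - b2*X2 i) * X1 i = 0 := by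
    apply key_min
    intro t
    calc ∑ i, (Y i - b0 - b1*X1 i - b2*X2 i)^2
        ≤ ∑ i, (Y i - b0 - (b1+t)*X1 i - b2*X2 i)^2 := hBmin b0 (b1+t) b2
      _ = ∑ i, ((Y i - b0 - b1*X1 i - b2*X2 i) - t * X1 i)^2 :=
        Finset.sum_congr rfl fun i _ => by ring
  have N2 : ∑ i, (Y i - b0 - b1*X1 i - b2*X2 i) * X2 i = 0 := by
    apply key_min
    intro t
    calc ∑ i, (Y i - b0 - b1*X1 i - b2*X2 i)^2
        ≤ ∑ i, (Y i - b0 - b1*X1 i - (b2+t)*X2 i)^2 := hBmin b0 b1 (b2+t)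
      _ = ∑ i, ((Y i - b0 - b1*X1 i - b2*X2 i) - t * X2 i)^2 :=
        Finset.sum_congr rfl fun i _ => by ring
  -- turn them into sum identities
  have E0 : ∑ i, (Y i - b0 - b1*X1 i - b2*X2 i) * 1
      = (∑ i, Y i) - b0*(p:ℝ) - b1*(∑ i, X1 i) - b2*(∑ i, X2 i) := by
    rw [Finset.mul_sum, Finset.mul_sum,
      show b0*(p:ℝ) = ∑ _i : Fin p, b0 by
        simp [Finset.sum_const, Finset.card_univ, mul_comm],
      ← Finset.sum_sub_distrib, ← Finset.sum_sub_distrib, ← Finset.sum_sub_distrib]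
    exact Finset.sum_congr rfl fun i _ => by ring
  have E1 : ∑ i, (Y i - b0 - b1*X1 i - b2*X2 i) * X1 i
      = (∑ i, X1 i * Y i) - b0*(∑ i, X1 i) - b1*(∑ i, X1 i * X1 i)
        - b2*(∑ i, X1 i * X2 i) := by
    rw [Finset.mul_sum, Finset.mul_sum, Finset.mul_sum,
      ← Finset.sum_sub_distrib, ← Finset.sum_sub_distrib, ← Finset.sum_sub_distrib]
    exact Finset.sum_congr rfl fun i _ => by ring
  have E2 : ∑ i, (Y i - b0 - b1*X1 i - b2*X2 i) * X2 i
      = (∑ i, X2 i * Y i) - b0*(∑ i, X2 i) - b1*(∑ i, X1 i * X2 i)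
        - b2*(∑ i, X2 i * X2 i) := by
    rw [Finset.mul_sum, Finset.mul_sum, Finset.mul_sum,
      ← Finset.sum_sub_distrib, ← Finset.sum_sub_distrib, ← Finset.sum_sub_distrib]
    exact Finset.sum_congr rfl fun i _ => by ring
  rw [E0] at N0; rw [E1] at N1; rw [E2] at N2
  -- covariance-form normal equations
  have e1 : cov p X1 Y = b1 * svar p X1 + b2 * cov p X1 X2 := by
    rw [svar, cov_eq p hp, cov_eq p hp, cov_eq p hp]
    field_simp
    linear_combination (p:ℝ) * N1 - (∑ i, X1 i) * N0
      + (-(p:ℝ) * b1) * (Finset.sum_congr rfl fun i _ => sq (X1 i) :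
        ∑ i, X1 i ^ 2 = ∑ i, X1 i * X1 i)
  have e2 : cov p X2 Y = b1 * cov p X1 X2 + b2 * svar p X2 := by
    rw [svar, cov_eq p hp, cov_eq p hp, cov_eq p hp]
    field_simp
    linear_combination (p:ℝ) * N2 - (∑ i, X2 i) * N0
      + (-(p:ℝ) * b2) * (Finset.sum_congr rfl fun i _ => sq (X2 i) :
        ∑ i, X2 i ^ 2 = ∑ i, X2 i * X2 i)
  -- decompose the adjusted covariances
  set c := regSlope p X1 X2 with hc
  have hcval : c * svar p X1 = cov p X1 X2 := by
    rw [hc, regSlope, div_mul_cancel₀ _ hv1]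
  have hcovstarY : cov p (fun i => X2 i - c * X1 i) Y
      = cov p X2 Y - c * cov p X1 Y := cov_sub_smul p hp X2 X1 Y c
  have hvarstar : svar p (fun i => X2 i - c * X1 i)
      = svar p X2 - 2*c*cov p X1 X2 + c^2 * svar p X1 := by
    rw [svar, cov_sub_smul p hp X2 X1 _ c,
      cov_comm p X2 (fun i => X2 i - c * X1 i),
      cov_comm p X1 (fun i => X2 i - c * X1 i),
      cov_sub_smul p hp X2 X1 X2 c, cov_sub_smul p hp X2 X1 X1 c,
      cov_comm p X2 X1]
    unfold svar
    ring
  rw [regSlope, div_eq_iff hvstar, hcovstarY, hvarstar]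
  linear_combination e2 - c*e1 - (b1 + b2*c)*hcval
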